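/- Neither greedy rule is optimal (the claim illustrated by Example 1): There exist finitely many sources S_1, …, S_l (finite sets of tuples with access times ta_i ≥ 0 and per-tuple transfer times tr_i > 0) and a number k with 1 ≤ k ≤ |S_1 ∪ … ∪ S_l| such that: the greedy-by-query-rate permutation (which at each step selects the not-yet-chosen source maximizing (|S| − |∩S|)/(ta + tr·|S|)) does not achieve the minimum time cost T(Q_k(·)) over all permutations, and the greedy-by-residual-tuples permutation (which at each step selects the not-yet-chosen source maximizing the residual tuple count |S| − |∩S|) also does not achieve the minimum time cost. -/

import Mathlib

open Finset

variable {α : Type*}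

/-- The tuples retrieved from the first `p` positions of the permutation `σ`
(position `i` queries source `σ i`). -/
def prefUnion [DecidableEq α] {l : ℕ} (S : Fin l → Finset α)
    (σ : Equiv.Perm (Fin l)) (p : ℕ) : Finset α :=
  (Finset.univ.filter (fun i : Fin l => (i : ℕ) < p)).biUnion (fun i => S (σ i))

/-- The residual count at position `i` of the permutation `σ`:
the number of tuples of the `i`-th queried source not contained in any earlier source. -/
def resid [DecidableEq α] {l : ℕ} (S : Fin l → Finset α)
    (σ : Equiv.Perm (Fin l)) (i : Fin l) : ℕ :=
  (S (σ i) \ prefUnion S σ (i : ℕ)).card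

/-- The time needed to query source `i` completely: access time plus
per-tuple transfer time times the number of tuples. -/
def srcTime {l : ℕ} (S : Fin l → Finset α) (ta tr : Fin l → ℝ) (i : Fin l) : ℝ :=
  ta i + tr i * (S i).card

/-- Cumulative residual tuple count of the first `p` positions. -/
def cumResid [DecidableEq α] {l : ℕ} (S : Fin l → Finset α)
    (σ : Equiv.Perm (Fin l)) (p : ℕ) : ℕ :=
  ∑ i ∈ Finset.univ.filter (fun i : Fin l => (i : ℕ) < p), resid S σ i

/-- Cumulative time cost of querying the first `p` positions. -/
def cumTime {l : ℕ} (S : Fin l → Finset α) (ta tr : Fin l → ℝ)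
    (σ : Equiv.Perm (Fin l)) (p : ℕ) : ℝ :=
  ∑ i ∈ Finset.univ.filter (fun i : Fin l => (i : ℕ) < p), srcTime S ta tr (σ i)

/-- `i_k`: the least prefix length whose cumulative residual count reaches `k`. -/
noncomputable def ikOf [DecidableEq α] {l : ℕ} (S : Fin l → Finset α)
    (σ : Equiv.Perm (Fin l)) (k : ℕ) : ℕ :=
  sInf {p : ℕ | k ≤ cumResid S σ p}

/-- The average query rate `v_avg(Π, k)`. -/
noncomputable def vAvg [DecidableEq α] {l : ℕ} (S : Fin l → Finset α) (ta tr : Fin l → ℝ)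
    (σ : Equiv.Perm (Fin l)) (k : ℕ) : ℝ :=
  (cumResid S σ (ikOf S σ k) : ℝ) / cumTime S ta tr σ (ikOf S σ k)

/-- The time cost `T(Q_k(Π)) = k / v_avg(Π, k)`. -/
noncomputable def timeCost [DecidableEq α] {l : ℕ} (S : Fin l → Finset α) (ta tr : Fin l → ℝ)
    (σ : Equiv.Perm (Fin l)) (k : ℕ) : ℝ :=
  (k : ℝ) / vAvg S ta tr σ k

/-- A permutation is greedy-by-query-rate if at each step `i` the chosen source
maximizes the query rate `|S \ U_{i-1}| / (ta + tr·|S|)` among all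
not-yet-chosen sources (which occupy the positions `j ≥ i`). -/
def IsGreedyRate [DecidableEq α] {l : ℕ} (S : Fin l → Finset α) (ta tr : Fin l → ℝ)
    (σ : Equiv.Perm (Fin l)) : Prop :=
  ∀ i j : Fin l, i ≤ j →
    ((S (σ j) \ prefUnion S σ (i : ℕ)).card : ℝ) / srcTime S ta tr (σ j)
      ≤ ((S (σ i) \ prefUnion S σ (i : ℕ)).card : ℝ) / srcTime S ta tr (σ i)

/-- A permutation is optimal if its time cost is minimal among all permutations. -/
def IsOptimal [DecidableEq α] {l : ℕ} (S : Fin l → Finset α) (ta tr : Fin l → ℝ)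
    (σopt : Equiv.Perm (Fin l)) (k : ℕ) : Prop :=
  ∀ σ : Equiv.Perm (Fin l), timeCost S ta tr σopt k ≤ timeCost S ta tr σ k

/-- A permutation is greedy-by-residual-tuples if at each step `i` the chosen
source maximizes the residual tuple count `|S| − |∩S| = |S \ U_{i-1}|` among all
not-yet-chosen sources (which occupy the positions `j ≥ i`). -/
def IsGreedyResid [DecidableEq α] {l : ℕ} (S : Fin l → Finset α)
    (σ : Equiv.Perm (Fin l)) : Prop :=
  ∀ i j : Fin l, i ≤ j →
    (S (σ j) \ prefUnion S σ (i : ℕ)).card ≤ (S (σ i) \ prefUnion S σ (i : ℕ)).card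


namespace GreedyWitness

private def A : Finset ℕ := Finset.range 5
private def B : Finset ℕ := Finset.Ico 10 30
private def C : Finset ℕ := Finset.range 10

private def SW : Fin 3 → Finset ℕ := ![A, B, C]
private def taW : Fin 3 → ℝ := fun _ => 0
private def trW : Fin 3 → ℝ := ![0.1, 2.2, 1]

lemma filt0 : (Finset.univ.filter (fun i : Fin 3 => (i : ℕ) < 0)) = ∅ := by decide
lemma filt1 : (Finset.univ.filter (fun i : Fin 3 => (i : ℕ) < 1)) = {0} := by decide
lemma filt2 : (Finset.univ.filter (fun i : Fin 3 => (i : ℕ) < 2)) = {0, 1} := by decide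

lemma prefUnion_zero (S : Fin 3 → Finset ℕ) (σ : Equiv.Perm (Fin 3)) :
    prefUnion S σ 0 = ∅ := by
  rw [prefUnion, filt0, Finset.biUnion_empty]

lemma prefUnion_one (S : Fin 3 → Finset ℕ) (σ : Equiv.Perm (Fin 3)) :
    prefUnion S σ 1 = S (σ 0) := by
  rw [prefUnion, filt1, Finset.singleton_biUnion]

lemma prefUnion_two (S : Fin 3 → Finset ℕ) (σ : Equiv.Perm (Fin 3)) :
    prefUnion S σ 2 = S (σ 0) ∪ S (σ 1) := by
  rw [prefUnion, filt2,
    show ({0, 1} : Finset (Fin 3)) = insert 0 {1} from rfl,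
    Finset.biUnion_insert, Finset.singleton_biUnion]

lemma cumResid_zero (S : Fin 3 → Finset ℕ) (σ : Equiv.Perm (Fin 3)) :
    cumResid S σ 0 = 0 := by
  rw [cumResid, filt0, Finset.sum_empty]

lemma cumResid_one (S : Fin 3 → Finset ℕ) (σ : Equiv.Perm (Fin 3)) :
    cumResid S σ 1 = (S (σ 0)).card := by
  rw [cumResid, filt1, Finset.sum_singleton, resid]
  rw [show ((0 : Fin 3) : ℕ) = 0 from rfl, prefUnion_zero, Finset.sdiff_empty]

lemma cumResid_two (S : Fin 3 → Finset ℕ) (σ : Equiv.Perm (Fin 3)) :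
    cumResid S σ 2 = (S (σ 0)).card + (S (σ 1) \ S (σ 0)).card := by
  rw [cumResid, filt2, show ({0, 1} : Finset (Fin 3)) = insert 0 {1} from rfl,
    Finset.sum_insert (by decide), Finset.sum_singleton, resid, resid]
  rw [show ((0 : Fin 3) : ℕ) = 0 from rfl, show ((1 : Fin 3) : ℕ) = 1 from rfl,
    prefUnion_zero, prefUnion_one, Finset.sdiff_empty]

lemma cumTime_one (S : Fin 3 → Finset ℕ) (ta tr : Fin 3 → ℝ) (σ : Equiv.Perm (Fin 3)) :
    cumTime S ta tr σ 1 = srcTime S ta tr (σ 0) := by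
  rw [cumTime, filt1, Finset.sum_singleton]

lemma cumTime_two (S : Fin 3 → Finset ℕ) (ta tr : Fin 3 → ℝ) (σ : Equiv.Perm (Fin 3)) :
    cumTime S ta tr σ 2 = srcTime S ta tr (σ 0) + srcTime S ta tr (σ 1) := by
  rw [cumTime, filt2, show ({0, 1} : Finset (Fin 3)) = insert 0 {1} from rfl,
    Finset.sum_insert (by decide), Finset.sum_singleton]

lemma sInf_eq_of {s : Set ℕ} {n : ℕ} (h : n ∈ s) (h' : ∀ m < n, m ∉ s) : sInf s = n := by
  refine le_antisymm (Nat.sInf_le h) ?_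
  by_contra hc
  push_neg at hc
  exact h' _ hc (Nat.sInf_mem ⟨n, h⟩)

lemma cardA : A.card = 5 := by decide
lemma cardB : B.card = 20 := by decide
lemma cardC : C.card = 10 := by decide

lemma srcTime0 : srcTime SW taW trW 0 = 0.5 := by
  rw [srcTime, show SW 0 = A from rfl, cardA]
  norm_num [taW, trW]

lemma srcTime1 : srcTime SW taW trW 1 = 44 := by
  rw [srcTime, show SW 1 = B from rfl, cardB]
  norm_num [taW, trW]

lemma srcTime2 : srcTime SW taW trW 2 = 10 := by
  rw [srcTime, show SW 2 = C from rfl, cardC]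
  norm_num [taW, trW]
  rfl

lemma fin3cases : ∀ x : Fin 3, x = 0 ∨ x = 1 ∨ x = 2 := by decide

/-- cost when source `B` (index 1) is queried first. -/
lemma timeCost_first1 (σ : Equiv.Perm (Fin 3)) (h : σ 0 = 1) :
    timeCost SW taW trW σ 10 = 22 := by
  have hik : ikOf SW σ 10 = 1 := by
    refine sInf_eq_of ?_ ?_
    · show 10 ≤ cumResid SW σ 1
      rw [cumResid_one, h]; rw [show SW 1 = B from rfl, cardB]; norm_num
    · intro m hm
      interval_cases m
      show ¬ (10 ≤ cumResid SW σ 0)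
      rw [cumResid_zero]; norm_num
  rw [timeCost, vAvg, hik, cumResid_one, cumTime_one, h, srcTime1,
    show SW 1 = B from rfl, cardB]
  norm_num

/-- cost when source `C` (index 2) is queried first. -/
lemma timeCost_first2 (σ : Equiv.Perm (Fin 3)) (h : σ 0 = 2) :
    timeCost SW taW trW σ 10 = 10 := by
  have hik : ikOf SW σ 10 = 1 := by
    refine sInf_eq_of ?_ ?_
    · show 10 ≤ cumResid SW σ 1
      rw [cumResid_one, h]; rw [show SW 2 = C from rfl, cardC]
    · intro m hm
      interval_cases m
      show ¬ (10 ≤ cumResid SW σ 0)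
      rw [cumResid_zero]; norm_num
  rw [timeCost, vAvg, hik, cumResid_one, cumTime_one, h, srcTime2,
    show SW 2 = C from rfl, cardC]
  norm_num

lemma cardCsdA : (C \ A).card = 5 := by decide

/-- cost of the rate-greedy order (A, C, B). -/
lemma timeCost_rate (σ : Equiv.Perm (Fin 3)) (h0 : σ 0 = 0) (h1 : σ 1 = 2) :
    timeCost SW taW trW σ 10 = 10.5 := by
  have hc2 : cumResid SW σ 2 = 10 := by
    rw [cumResid_two, h0, h1, show SW 0 = A from rfl, show SW 2 = C from rfl,
      cardA, cardCsdA]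
  have hik : ikOf SW σ 10 = 2 := by
    refine sInf_eq_of ?_ ?_
    · show 10 ≤ cumResid SW σ 2
      rw [hc2]
    · intro m hm
      interval_cases m
      · show ¬ (10 ≤ cumResid SW σ 0)
        rw [cumResid_zero]; norm_num
      · show ¬ (10 ≤ cumResid SW σ 1)
        rw [cumResid_one, h0, show SW 0 = A from rfl, cardA]; norm_num
  rw [timeCost, vAvg, hik, hc2, cumTime_two, h0, h1, srcTime0, srcTime2]
  norm_num

/-- The rate-greedy permutation: order (A, C, B). -/
def permR : Equiv.Perm (Fin 3) := Equiv.swap 1 2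

/-- The residual-greedy permutation: order (B, C, A). -/
def permD : Equiv.Perm (Fin 3) := (Equiv.swap 1 2).trans (Equiv.swap 0 1)

/-- The good permutation: order (C, ..). -/
def permO : Equiv.Perm (Fin 3) := Equiv.swap 0 2


lemma cardBsdA : (B \ A).card = 20 := by decide
lemma cardBsdAC : (B \ (A ∪ C)).card = 20 := by decide

lemma permR0 : permR 0 = 0 := by decide
lemma permR1 : permR 1 = 2 := by decide
lemma permR2 : permR 2 = 1 := by decide
lemma permO0 : permO 0 = 2 := by decide

/-- `permR` is greedy-by-rate. -/
lemma greedyRate_permR : IsGreedyRate SW taW trW permR := by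
  have g01 : ((SW (permR 1) \ prefUnion SW permR ((0 : Fin 3) : ℕ)).card : ℝ) /
        srcTime SW taW trW (permR 1)
      ≤ ((SW (permR 0) \ prefUnion SW permR ((0 : Fin 3) : ℕ)).card : ℝ) /
        srcTime SW taW trW (permR 0) := by
    rw [permR0, permR1, show ((0 : Fin 3) : ℕ) = 0 from rfl, prefUnion_zero,
      Finset.sdiff_empty, Finset.sdiff_empty, srcTime0, srcTime2,
      show SW 0 = A from rfl, show SW 2 = C from rfl, cardA, cardC]
    norm_num
  have g02 : ((SW (permR 2) \ prefUnion SW permR ((0 : Fin 3) : ℕ)).card : ℝ) /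
        srcTime SW taW trW (permR 2)
      ≤ ((SW (permR 0) \ prefUnion SW permR ((0 : Fin 3) : ℕ)).card : ℝ) /
        srcTime SW taW trW (permR 0) := by
    rw [permR0, permR2, show ((0 : Fin 3) : ℕ) = 0 from rfl, prefUnion_zero,
      Finset.sdiff_empty, Finset.sdiff_empty, srcTime0, srcTime1,
      show SW 0 = A from rfl, show SW 1 = B from rfl, cardA, cardB]
    norm_num
  have g12 : ((SW (permR 2) \ prefUnion SW permR ((1 : Fin 3) : ℕ)).card : ℝ) /
        srcTime SW taW trW (permR 2)
      ≤ ((SW (permR 1) \ prefUnion SW permR ((1 : Fin 3) : ℕ)).card : ℝ) /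
        srcTime SW taW trW (permR 1) := by
    rw [permR1, permR2, show ((1 : Fin 3) : ℕ) = 1 from rfl, prefUnion_one, permR0,
      show SW 0 = A from rfl, show SW 1 = B from rfl, show SW 2 = C from rfl,
      srcTime1, srcTime2, cardBsdA, cardCsdA]
    norm_num
  intro i j hij
  fin_cases i <;> fin_cases j <;>
    first
      | exact le_rfl
      | exact absurd hij (by decide)
      | exact g01
      | exact g02
      | exact g12

/-- any greedy-by-rate permutation starts with source 0 then source 2. -/
lemma greedyRate_forces (σ : Equiv.Perm (Fin 3)) (hσ : IsGreedyRate SW taW trW σ) :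
    σ 0 = 0 ∧ σ 1 = 2 := by
  have h := hσ 0 (σ.symm 0) (Fin.zero_le _)
  rw [Equiv.apply_symm_apply, show ((0 : Fin 3) : ℕ) = 0 from rfl, prefUnion_zero,
    Finset.sdiff_empty, Finset.sdiff_empty, srcTime0, show SW 0 = A from rfl, cardA] at h
  have h0 : σ 0 = 0 := by
    rcases fin3cases (σ 0) with h0 | h0 | h0
    · exact h0
    · rw [h0, srcTime1, show SW 1 = B from rfl, cardB] at h
      norm_num at h
    · rw [h0, srcTime2, show SW 2 = C from rfl, cardC] at h
      norm_num at h
  refine ⟨h0, ?_⟩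
  rcases fin3cases (σ.symm 2) with hs | hs | hs
  · exfalso
    have := congrArg σ hs
    rw [Equiv.apply_symm_apply, h0] at this
    exact absurd this (by decide)
  · have := congrArg σ hs
    rw [Equiv.apply_symm_apply] at this
    exact this.symm
  · exfalso
    have h2 : σ 2 = 2 := by
      have := congrArg σ hs
      rw [Equiv.apply_symm_apply] at this
      exact this.symm
    have h1 : σ 1 = 1 := by
      rcases fin3cases (σ 1) with h1 | h1 | h1
      · exact absurd (σ.injective (h1.trans h0.symm)) (by decide)
      · exact h1
      · exact absurd (σ.injective (h1.trans h2.symm)) (by decide)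
    have h' := hσ 1 2 (by decide)
    rw [show ((1 : Fin 3) : ℕ) = 1 from rfl, prefUnion_one, h0, h1, h2,
      show SW 0 = A from rfl, show SW 1 = B from rfl, show SW 2 = C from rfl,
      srcTime1, srcTime2, cardBsdA, cardCsdA] at h'
    norm_num at h'

/-- `permD` is greedy-by-residual. -/
lemma greedyResid_permD : IsGreedyResid SW permD := by
  have h : ∀ i j : Fin 3, i ≤ j →
      (SW (permD j) \ prefUnion SW permD (i : ℕ)).card
        ≤ (SW (permD i) \ prefUnion SW permD (i : ℕ)).card := by decide
  exact h

/-- any greedy-by-residual permutation starts with source 1. -/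
lemma greedyResid_forces (σ : Equiv.Perm (Fin 3)) (hσ : IsGreedyResid SW σ) :
    σ 0 = 1 := by
  have h := hσ 0 (σ.symm 1) (Fin.zero_le _)
  rw [Equiv.apply_symm_apply, show ((0 : Fin 3) : ℕ) = 0 from rfl, prefUnion_zero,
    Finset.sdiff_empty, Finset.sdiff_empty, show SW 1 = B from rfl, cardB] at h
  rcases fin3cases (σ 0) with h0 | h0 | h0
  · rw [h0, show SW 0 = A from rfl, cardA] at h; omega
  · exact h0
  · rw [h0, show SW 2 = C from rfl, cardC] at h; omega

end GreedyWitness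

open GreedyWitness

/-- **Neither greedy rule is optimal** (the claim illustrated by Example 1).
There is an instance — finitely many sources with nonnegative access times,
positive per-tuple transfer times and a feasible `1 ≤ k ≤ |S_1 ∪ … ∪ S_l|` —
on which greedy-by-query-rate permutations exist but none achieves the minimum
time cost, and greedy-by-residual-tuples permutations exist but none achieves
the minimum time cost either. -/
theorem greedy_not_optimal :
    ∃ (l : ℕ) (S : Fin l → Finset ℕ) (ta tr : Fin l → ℝ) (k : ℕ),
      0 < l ∧ (∀ i, (S i).Nonempty) ∧ (∀ i, 0 ≤ ta i) ∧ (∀ i, 0 < tr i) ∧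
      1 ≤ k ∧ k ≤ (Finset.univ.biUnion S).card ∧
      (∃ σ : Equiv.Perm (Fin l), IsGreedyRate S ta tr σ) ∧
      (∀ σ : Equiv.Perm (Fin l), IsGreedyRate S ta tr σ →
        ∃ σ' : Equiv.Perm (Fin l), timeCost S ta tr σ' k < timeCost S ta tr σ k) ∧
      (∃ σ : Equiv.Perm (Fin l), IsGreedyResid S σ) ∧
      (∀ σ : Equiv.Perm (Fin l), IsGreedyResid S σ →
        ∃ σ' : Equiv.Perm (Fin l), timeCost S ta tr σ' k < timeCost S ta tr σ k) := by
  refine ⟨3, SW, taW, trW, 10, by norm_num, by decide, fun i => le_refl 0, ?_, by norm_num,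
    by decide, ⟨permR, greedyRate_permR⟩, ?_, ⟨permD, greedyResid_permD⟩, ?_⟩
  · intro i
    fin_cases i <;> norm_num [trW]
  · intro σ hσ
    obtain ⟨h0, h1⟩ := greedyRate_forces σ hσ
    refine ⟨permO, ?_⟩
    rw [timeCost_first2 permO permO0, timeCost_rate σ h0 h1]
    norm_num
  · intro σ hσ
    refine ⟨permO, ?_⟩
    rw [timeCost_first2 permO permO0, timeCost_first1 σ (greedyResid_forces σ hσ)]
    norm_num
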